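/- The function W(x) = Σ_{i=1}^3 C_i e^{η_i x} on [0,∞) satisfies ∫₀^∞ e^{−βx} W(x) dx = 1/(Ψ(β) − r) for all β > η₁ = 1, where Ψ(β) = μβ + σ²β²/2 − λβ/(β+ρ), provided η₁ = 1 > η₃ > η₂ are the three real roots of Ψ(θ) = r and C_i = 2(η_i+ρ)/(σ² Π_{j≠i}(η_i−η_j)). -/

import Mathlib

open MeasureTheory Real Set Filter

lemma lap_exp (b : ℝ) (hb : 0 < b) :
    ∫ x in Set.Ioi (0:ℝ), Real.exp (-b*x) = 1/b := by
  have h := integral_Ioi_of_hasDerivAt_of_tendsto' (a := (0:ℝ))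
    (f := fun x => -Real.exp (-b*x)/b) (f' := fun x => Real.exp (-b*x)) (m := 0)
    (fun x _ => by
      have h1 : HasDerivAt (fun y => Real.exp (-b*y)) (Real.exp (-b*x) * (-b)) x := by
        simpa using ((hasDerivAt_id x).const_mul (-b)).exp
      have h2 := (h1.neg).div_const b
      refine h2.congr_deriv ?_
      simp [hb.ne'])
    (exp_neg_integrableOn_Ioi 0 hb)
    (by
      have h3 : Tendsto (fun x : ℝ => Real.exp (-b*x)) atTop (nhds 0) := by
        have := Real.tendsto_exp_neg_atTop_nhds_zero.comp
          (Filter.tendsto_id.const_mul_atTop hb)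
        simpa [Function.comp_def, neg_mul] using this
      simpa using (h3.neg.div_const b))
  rw [h]
  field_simp
  simp

lemma quad_zero (a b c x1 x2 x3 : ℝ) (h12 : x1 ≠ x2) (h13 : x1 ≠ x3) (h23 : x2 ≠ x3)
    (e1 : a*x1^2 + b*x1 + c = 0) (e2 : a*x2^2 + b*x2 + c = 0)
    (e3 : a*x3^2 + b*x3 + c = 0) : a = 0 ∧ b = 0 ∧ c = 0 := by
  have d1 : (x1 - x2) * (a*(x1+x2) + b) = 0 := by linear_combination e1 - e2
  have d2 : (x1 - x3) * (a*(x1+x3) + b) = 0 := by linear_combination e1 - e3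
  have f1 : a*(x1+x2) + b = 0 :=
    (mul_eq_zero.mp d1).resolve_left (sub_ne_zero.mpr h12)
  have f2 : a*(x1+x3) + b = 0 :=
    (mul_eq_zero.mp d2).resolve_left (sub_ne_zero.mpr h13)
  have g : (x2 - x3) * a = 0 := by linear_combination f1 - f2
  have ha : a = 0 := (mul_eq_zero.mp g).resolve_left (sub_ne_zero.mpr h23)
  have hb : b = 0 := by linear_combination f1 - (x1+x2)*ha
  refine ⟨ha, hb, ?_⟩
  linear_combination e1 - x1^2*ha - x1*hb

lemma cubic_of_root (μ σ lam ρ r η : ℝ) (hηρ : η+ρ ≠ 0)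
    (h : μ*η + σ^2*η^2/2 - lam*η/(η+ρ) = r) :
    (μ*η + σ^2*η^2/2 - r)*(η+ρ) - lam*η = 0 := by
  have h2 : lam*η/(η+ρ) = μ*η + σ^2*η^2/2 - r := by linarith
  rw [div_eq_iff hηρ] at h2
  linear_combination -h2

set_option maxHeartbeats 2000000 in
theorem scale_function_laplace (σ lam ρ r μ η₂ η₃ C₁ C₂ C₃ : ℝ)
    (hσ : 0 < σ) (hlam : 0 < lam) (hρ : 0 < ρ) (hr : 0 < r)
    (hμ : μ = r - σ^2/2 + lam/(1+ρ))
    (Ψ : ℝ → ℝ) (hΨ : ∀ θ, Ψ θ = μ*θ + σ^2*θ^2/2 - lam*θ/(θ+ρ))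
    (hroot1 : Ψ 1 = r) (hroot2 : Ψ η₂ = r) (hroot3 : Ψ η₃ = r)
    (hord1 : η₂ < -ρ) (hord2 : -ρ < η₃) (hord3 : η₃ < 0)
    (hC₁ : C₁ = 2*(1+ρ)/(σ^2*(1-η₂)*(1-η₃)))
    (hC₂ : C₂ = 2*(η₂+ρ)/(σ^2*(η₂-1)*(η₂-η₃)))
    (hC₃ : C₃ = 2*(η₃+ρ)/(σ^2*(η₃-1)*(η₃-η₂)))
    (W : ℝ → ℝ)
    (hW : ∀ x, W x = C₁*Real.exp (1*x) + C₂*Real.exp (η₂*x) + C₃*Real.exp (η₃*x)) :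
    ∀ β : ℝ, 1 < β →
      ∫ x in Set.Ioi (0:ℝ), Real.exp (-β*x) * W x = 1/(Ψ β - r) := by
  intro β hβ
  have hσ2 : σ^2 ≠ 0 := by positivity
  have hρ1 : (1:ℝ)+ρ ≠ 0 := by positivity
  have hη2ρ : η₂+ρ ≠ 0 := ne_of_lt (by linarith)
  have hη3ρ : η₃+ρ ≠ 0 := ne_of_gt (by linarith)
  have hβρ : β+ρ ≠ 0 := ne_of_gt (by linarith)
  -- cubic equations from the roots
  have h1 := hroot1; rw [hΨ] at h1
  have h2 := hroot2; rw [hΨ] at h2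
  have h3 := hroot3; rw [hΨ] at h3
  have h1c := cubic_of_root μ σ lam ρ r 1 hρ1 h1
  have h2c := cubic_of_root μ σ lam ρ r η₂ hη2ρ h2
  have h3c := cubic_of_root μ σ lam ρ r η₃ hη3ρ h3
  set a := μ + σ^2*ρ/2 + σ^2/2*(1+η₂+η₃) with ha_def
  set b := μ*ρ - r - lam - σ^2/2*(η₂+η₃+η₂*η₃) with hb_def
  set c := -(r*ρ) + σ^2/2*(η₂*η₃) with hc_def
  -- correct b: coefficient of θ in σ²/2(θ-1)(θ-η₂)(θ-η₃) is σ²/2(η₂+η₃+η₂η₃)?? handled by ring check below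
  have e1 : a*(1:ℝ)^2 + b*1 + c = 0 := by linear_combination h1c
  have e2 : a*η₂^2 + b*η₂ + c = 0 := by linear_combination h2c
  have e3 : a*η₃^2 + b*η₃ + c = 0 := by linear_combination h3c
  obtain ⟨ha, hb, hc0⟩ := quad_zero a b c 1 η₂ η₃
    (by intro h; rw [← h] at hord1; linarith) (by intro h; rw [← h] at hord3; linarith)
    (by intro h; rw [h] at hord1; linarith) e1 e2 e3
  have hcub : (μ*β + σ^2*β^2/2 - r)*(β+ρ) - lam*β
      = σ^2/2*(β-1)*(β-η₂)*(β-η₃) := by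
    linear_combination β^2*ha + β*hb + hc0
  have hval : Ψ β - r = σ^2/2*(β-1)*(β-η₂)*(β-η₃)/(β+ρ) := by
    have hdm : lam*β/(β+ρ)*(β+ρ) = lam*β := div_mul_cancel₀ _ hβρ
    rw [hΨ, eq_div_iff hβρ]
    linear_combination hcub - hdm
  -- integral computation
  have hint : ∀ (cc η : ℝ), η < β →
      ∫ x in Set.Ioi (0:ℝ), cc * Real.exp (-(β-η)*x) = cc/(β-η) := by
    intro cc η hη
    rw [MeasureTheory.integral_const_mul, lap_exp (β-η) (by linarith)]
    ring
  have key : ∀ x, Real.exp (-β*x) * W x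
      = C₁*Real.exp (-(β-1)*x) + C₂*Real.exp (-(β-η₂)*x) + C₃*Real.exp (-(β-η₃)*x) := by
    intro x
    rw [hW x]
    have me : ∀ η : ℝ, Real.exp (-β*x) * Real.exp (η*x) = Real.exp (-(β-η)*x) := by
      intro η; rw [← Real.exp_add]; ring_nf
    rw [mul_add, mul_add,
      show Real.exp (-β*x) * (C₁*Real.exp (1*x)) = C₁ * (Real.exp (-β*x) * Real.exp (1*x)) by ring,
      show Real.exp (-β*x) * (C₂*Real.exp (η₂*x)) = C₂ * (Real.exp (-β*x) * Real.exp (η₂*x)) by ring,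
      show Real.exp (-β*x) * (C₃*Real.exp (η₃*x)) = C₃ * (Real.exp (-β*x) * Real.exp (η₃*x)) by ring,
      me 1, me η₂, me η₃]
  have i1 : MeasureTheory.IntegrableOn (fun x => C₁ * Real.exp (-(β-1)*x)) (Set.Ioi (0:ℝ)) :=
    (exp_neg_integrableOn_Ioi 0 (by linarith : (0:ℝ) < β-1)).const_mul C₁
  have i2 : MeasureTheory.IntegrableOn (fun x => C₂ * Real.exp (-(β-η₂)*x)) (Set.Ioi (0:ℝ)) :=
    (exp_neg_integrableOn_Ioi 0 (by linarith : (0:ℝ) < β-η₂)).const_mul C₂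
  have i3 : MeasureTheory.IntegrableOn (fun x => C₃ * Real.exp (-(β-η₃)*x)) (Set.Ioi (0:ℝ)) :=
    (exp_neg_integrableOn_Ioi 0 (by linarith : (0:ℝ) < β-η₃)).const_mul C₃
  calc ∫ x in Set.Ioi (0:ℝ), Real.exp (-β*x) * W x
      = ∫ x in Set.Ioi (0:ℝ), (C₁*Real.exp (-(β-1)*x) + C₂*Real.exp (-(β-η₂)*x)
          + C₃*Real.exp (-(β-η₃)*x)) :=
        MeasureTheory.integral_congr_ae (Filter.Eventually.of_forall fun x => key x)
    _ = (∫ x in Set.Ioi (0:ℝ), (C₁*Real.exp (-(β-1)*x) + C₂*Real.exp (-(β-η₂)*x)))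
          + ∫ x in Set.Ioi (0:ℝ), C₃*Real.exp (-(β-η₃)*x) :=
        MeasureTheory.integral_add (i1.add i2) i3
    _ = (∫ x in Set.Ioi (0:ℝ), C₁*Real.exp (-(β-1)*x))
          + (∫ x in Set.Ioi (0:ℝ), C₂*Real.exp (-(β-η₂)*x))
          + ∫ x in Set.Ioi (0:ℝ), C₃*Real.exp (-(β-η₃)*x) := by
        rw [MeasureTheory.integral_add i1 i2]
    _ = C₁/(β-1) + C₂/(β-η₂) + C₃/(β-η₃) := by
        rw [hint C₁ 1 (by linarith), hint C₂ η₂ (by linarith), hint C₃ η₃ (by linarith)]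
    _ = 1/(Ψ β - r) := by
        rw [hval, hC₁, hC₂, hC₃]
        have hβ1 : β - 1 ≠ 0 := ne_of_gt (by linarith)
        have hβ2 : β - η₂ ≠ 0 := ne_of_gt (by linarith)
        have hβ3 : β - η₃ ≠ 0 := ne_of_gt (by linarith)
        have h1η2 : 1 - η₂ ≠ 0 := ne_of_gt (by linarith)
        have h1η3 : 1 - η₃ ≠ 0 := ne_of_gt (by linarith)
        have hη2η3 : η₂ - η₃ ≠ 0 := ne_of_lt (by linarith)
        have hη21 : η₂ - 1 ≠ 0 := ne_of_lt (by linarith)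
        have hη31 : η₃ - 1 ≠ 0 := ne_of_lt (by linarith)
        have hη32 : η₃ - η₂ ≠ 0 := ne_of_gt (by linarith)
        field_simp
        ring
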